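/- Let L be a number field and P ∈ L[Y] of degree at most d ≥ 1. Let y_1,…,y_N be distinct integers in an interval [A,B] ⊂ ℤ with N ≥ d+1, let D = B−A and M = max{|A|,|B|}, and suppose h(P(y_i)) ≤ H for all i. Then h(P) ≤ (N/(N−d))·H + D·log D + d·log(2M) + log(d+1). -/

import Mathlib

open Real Finset Polynomial


/- Abstract setup for absolute logarithmic Weil heights on a number field `L`:
places `v` with normalized absolute values `absv v` and local weights
`wt v = d_v / [L:ℚ]`, the archimedean places forming a finite set `arch` of
total weight `1`, the other places being nonarchimedean, and the product
formula holding. Integers `m ∈ ℤ ⊆ L` then satisfy `h(m) = log max{1,|m|}`. -/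

/-- The absolute logarithmic Weil height of an element. -/
noncomputable def heightElem {L V : Type*} [Field L]
    (absv : V → AbsoluteValue L ℝ) (wt : V → ℝ) (x : L) : ℝ :=
  ∑ᶠ v, wt v * Real.log (max 1 (absv v x))

/-- The height of a univariate polynomial: the height of the affine tuple of
its coefficients. -/
noncomputable def heightPoly {L V : Type*} [Field L]
    (absv : V → AbsoluteValue L ℝ) (wt : V → ℝ) (P : Polynomial L) : ℝ :=
  ∑ᶠ v, wt v * Real.log (max 1 (⨆ k, absv v (P.coeff k)))

/-- Height bound for a univariate polynomial of degree at most `d` over a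
number field from the heights of its values at `N ≥ d+1` distinct integers
`y_1, …, y_N` in an interval `[A,B]`: with `D = B − A`, `M = max{|A|,|B|}`,
and `h(P(y_i)) ≤ H` for all `i`, one has
`h(P) ≤ (N/(N−d))·H + D·log D + d·log(2M) + log(d+1)`. -/

theorem abv_natCast_le {L : Type*} [Field L] (f : AbsoluteValue L ℝ) (n : ℕ) :
    f (n : L) ≤ (n : ℝ) := by
  induction n with
  | zero => simp
  | succ n ih =>
    push_cast
    calc f ((n: L) + 1) ≤ f (n : L) + f 1 := f.add_le _ _
    _ ≤ (n:ℝ) + 1 := by rw [f.map_one]; linarith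

theorem abv_intCast_le {L : Type*} [Field L] (f : AbsoluteValue L ℝ) (m : ℤ) :
    f (m : L) ≤ |(m : ℝ)| := by
  rcases le_or_gt 0 m with h | h
  · lift m to ℕ using h
    rw [Int.cast_natCast]
    simpa using abv_natCast_le f m
  · obtain ⟨n, hm⟩ : ∃ n : ℕ, m = -(n : ℤ) := ⟨(-m).toNat, by omega⟩
    subst hm
    push_cast
    rw [f.map_neg, abs_neg, abs_of_nonneg (by positivity)]
    exact abv_natCast_le f n

theorem nonarch_natCast_le_one {L : Type*} [Field L] (f : AbsoluteValue L ℝ)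
    (hf : IsNonarchimedean ⇑f) (n : ℕ) : f (n : L) ≤ 1 := by
  induction n with
  | zero => simp
  | succ n ih =>
    push_cast
    calc f ((n:L) + 1) ≤ max (f (n:L)) (f 1) := hf _ _
    _ ≤ 1 := by rw [f.map_one]; exact max_le ih le_rfl

theorem nonarch_intCast_le_one {L : Type*} [Field L] (f : AbsoluteValue L ℝ)
    (hf : IsNonarchimedean ⇑f) (m : ℤ) : f (m : L) ≤ 1 := by
  rcases le_or_gt 0 m with h | h
  · lift m to ℕ using h
    rw [Int.cast_natCast]
    exact nonarch_natCast_le_one f hf m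
  · obtain ⟨n, hm⟩ : ∃ n : ℕ, m = -(n : ℤ) := ⟨(-m).toNat, by omega⟩
    subst hm
    push_cast
    rw [f.map_neg]
    exact nonarch_natCast_le_one f hf n

theorem pow_le_linear_absurd {r C : ℝ} (hr : 1 < r) (hC : 0 ≤ C)
    (h : ∀ k : ℕ, 1 ≤ k → r ^ k ≤ C * k) : False := by
  set ε := r - 1 with hε
  have hε0 : 0 < ε := by simp [hε]; linarith
  have key : ∀ m : ℕ, 1 ≤ m → (m : ℝ) * ε ^ 2 ≤ 2 * C := by
    intro m hm
    have h1 : (1 : ℝ) + m * ε ≤ r ^ m := by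
      have := one_add_mul_le_pow (a := ε) (by linarith) m
      simpa [hε] using this
    have h2 : ((m : ℝ) * ε) ^ 2 ≤ (r ^ m) ^ 2 := by
      apply sq_le_sq'
      · nlinarith [mul_nonneg (Nat.cast_nonneg m) hε0.le]
      · nlinarith [mul_nonneg (Nat.cast_nonneg m) hε0.le]
    have h3 : (r ^ m) ^ 2 = r ^ (2 * m) := by rw [← pow_mul, mul_comm]
    have h4 : r ^ (2 * m) ≤ C * (2 * m) := by
      have := h (2 * m) (by omega)
      push_cast at this ⊢
      linarith
    have hm1 : (1 : ℝ) ≤ m := by exact_mod_cast hm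
    nlinarith [sq_nonneg ((m:ℝ) * ε)]
  obtain ⟨m, hm⟩ := exists_nat_gt (max 1 (2 * C / ε ^ 2))
  have hm1 : 1 ≤ m := by
    have h7 := (le_max_left 1 (2 * C / ε ^ 2)).trans_lt hm
    exact_mod_cast Nat.one_le_iff_ne_zero.mpr (by rintro rfl; norm_num at h7)
  have := key m hm1
  have h5 : 2 * C / ε ^ 2 < m := (le_max_right _ _).trans_lt hm
  have h6 : 2 * C < m * ε ^ 2 := by
    rw [div_lt_iff₀ (by positivity)] at h5
    linarith
  linarith

theorem abv_ofDigits_le {L : Type*} [Field L] (f : AbsoluteValue L ℝ) {b : ℕ}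
    (hb : f (b : L) ≤ 1) (l : List ℕ) (hl : ∀ d ∈ l, d ≤ b) :
    f ((Nat.ofDigits b l : ℕ) : L) ≤ l.length * b := by
  induction l with
  | nil => simp
  | cons d l ih =>
    have hd : (d : ℝ) ≤ b := by exact_mod_cast hl d (by simp)
    have ihl : f ((Nat.ofDigits b l : ℕ) : L) ≤ l.length * b :=
      ih (fun x hx => hl x (by simp [hx]))
    have hcast : ((Nat.ofDigits b (d :: l) : ℕ) : L)
        = (d : L) + (b : L) * ((Nat.ofDigits b l : ℕ) : L) := by
      rw [Nat.ofDigits_cons]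
      push_cast
      ring
    rw [hcast]
    have hb0 : (0:ℝ) ≤ b := Nat.cast_nonneg b
    calc f ((d : L) + (b : L) * ((Nat.ofDigits b l : ℕ) : L))
        ≤ f (d : L) + f (b : L) * f ((Nat.ofDigits b l : ℕ) : L) := by
          refine (f.add_le _ _).trans ?_
          rw [f.map_mul]
      _ ≤ (b : ℝ) + 1 * (l.length * b) := by
          refine add_le_add ((abv_natCast_le f d).trans hd) ?_
          exact mul_le_mul hb ihl (f.nonneg _) zero_le_one
      _ ≤ (d :: l).length * b := by
          simp only [List.length_cons]
          push_cast
          nlinarith [Nat.cast_nonneg (α := ℝ) l.length]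

theorem abv_int_dichotomy {L : Type*} [Field L] [CharZero L] (f : AbsoluteValue L ℝ) :
    (∀ m : ℤ, f (m : L) ≤ 1) ∨ (∀ m : ℤ, m ≠ 0 → 1 ≤ f (m : L)) := by
  by_cases hb : ∀ n : ℕ, f (n : L) ≤ 1
  · left
    intro m
    rcases Int.natAbs_eq m with h | h
    · rw [h, Int.cast_natCast]; exact hb m.natAbs
    · rw [h, Int.cast_neg, Int.cast_natCast, f.map_neg]; exact hb m.natAbs
  · right
    push_neg at hb
    obtain ⟨a, ha⟩ := hb
    have ha2 : 2 ≤ a := by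
      by_contra hlt
      interval_cases a <;> simp [f.map_one] at ha <;> linarith
    intro m hm0
    by_contra hlt
    push_neg at hlt
    -- b := |m|, 2 ≤ b, f b < 1
    set b := m.natAbs with hbdef
    have hfb : f ((b : ℕ) : L) < 1 := by
      rcases Int.natAbs_eq m with h | h
      · rw [h, Int.cast_natCast] at hlt; exact hlt
      · rw [h, Int.cast_neg, Int.cast_natCast, f.map_neg] at hlt; exact hlt
    have hb2 : 2 ≤ b := by
      rcases Nat.lt_or_ge b 2 with h | h
      · interval_cases b
        · simp [hbdef] at hm0; omega
        · rw [Nat.cast_one, f.map_one] at hfb; linarith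
      · exact h
    -- key claim: f a ^ k ≤ C * k
    have hC : ∀ k : ℕ, 1 ≤ k → f ((a:ℕ) : L) ^ k ≤ (((Nat.log b a + 1) * b : ℕ) : ℝ) * k := by
      intro k hk
      have hak : (a ^ k : ℕ) ≠ 0 := by positivity
      have hlen : (Nat.digits b (a ^ k)).length = Nat.log b (a ^ k) + 1 :=
        Nat.digits_len b (a ^ k) hb2 hak
      have hloga : Nat.log b (a ^ k) < (Nat.log b a + 1) * k := by
        apply Nat.log_lt_of_lt_pow hak
        calc a ^ k < (b ^ (Nat.log b a + 1)) ^ k :=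
              Nat.pow_lt_pow_left (Nat.lt_pow_succ_log_self hb2 a) (by omega)
          _ = b ^ ((Nat.log b a + 1) * k) := by rw [← pow_mul]
      have hdig := abv_ofDigits_le f hfb.le (Nat.digits b (a ^ k))
        (fun d hd => (Nat.digits_lt_base hb2 hd).le)
      rw [Nat.ofDigits_digits] at hdig
      calc f ((a:ℕ) : L) ^ k = f (((a ^ k : ℕ) : ℕ) : L) := by
            rw [← f.map_pow]; push_cast; ring_nf
        _ ≤ (Nat.digits b (a ^ k)).length * b := hdig
        _ ≤ (((Nat.log b a + 1) * b : ℕ) : ℝ) * k := by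
            rw [hlen]
            push_cast
            have hk1 : (1:ℝ) ≤ k := by exact_mod_cast hk
            have : (Nat.log b (a ^ k) : ℝ) + 1 ≤ ((Nat.log b a : ℝ) + 1) * k := by
              exact_mod_cast Nat.succ_le_of_lt hloga
            nlinarith [Nat.cast_nonneg (α := ℝ) b, Nat.cast_nonneg (α := ℝ) (Nat.log b (a^k))]
    exact pow_le_linear_absurd ha (by positivity) hC

theorem coeff_prod_X_sub_C_le {ι : Type*} (s : Finset ι) (a : ι → ℤ) (M : ℤ) (hM : 0 ≤ M)
    (h : ∀ j ∈ s, |a j| ≤ M) (k : ℕ) :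
    |(∏ j ∈ s, (X - C (a j))).coeff k| ≤ (1 + M) ^ s.card := by
  classical
  induction s using Finset.cons_induction generalizing k with
  | empty =>
    simp only [prod_empty, coeff_one]
    split_ifs <;> simp <;> positivity
  | cons j s hj ih =>
    rw [Finset.prod_cons]
    have ihs : ∀ k, |(∏ j ∈ s, (X - C (a j))).coeff k| ≤ (1 + M) ^ s.card :=
      fun k => ih (fun x hx => h x (Finset.mem_cons_of_mem hx)) k
    have haj : |a j| ≤ M := h j (Finset.mem_cons_self j s)
    set Q := ∏ j ∈ s, (X - C (a j)) with hQ
    have expand : ((X - C (a j)) * Q).coeff k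
        = (X * Q).coeff k - a j * Q.coeff k := by
      rw [sub_mul, coeff_sub, coeff_C_mul]
    rw [expand, Finset.card_cons, pow_succ]
    rcases Nat.eq_zero_or_pos k with hk | hk
    · subst hk
      rw [Polynomial.mul_coeff_zero, coeff_X_zero, zero_mul, zero_sub, abs_neg, abs_mul]
      calc |a j| * |Q.coeff 0| ≤ M * (1 + M) ^ s.card :=
            mul_le_mul haj (ihs 0) (abs_nonneg _) hM
        _ ≤ (1 + M) ^ s.card * (1 + M) := by nlinarith [pow_nonneg (by linarith : (0:ℤ) ≤ 1 + M) s.card]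
    · obtain ⟨k, rfl⟩ := Nat.exists_eq_succ_of_ne_zero hk.ne'
      rw [Polynomial.coeff_X_mul]
      calc |Q.coeff k - a j * Q.coeff (k+1)| ≤ |Q.coeff k| + |a j * Q.coeff (k+1)| := abs_sub _ _
        _ ≤ (1 + M) ^ s.card + M * (1 + M) ^ s.card := by
            refine add_le_add (ihs k) ?_
            rw [abs_mul]
            exact mul_le_mul haj (ihs (k+1)) (abs_nonneg _) hM
        _ = (1 + M) ^ s.card * (1 + M) := by ring

theorem prod_Icc_one_int (n : ℕ) : (∏ t ∈ Finset.Icc (1:ℤ) (n:ℤ), t) = (n.factorial : ℤ) := by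
  induction n with
  | zero => simp
  | succ n ih =>
    have : Finset.Icc (1:ℤ) ((n+1 : ℕ):ℤ) = insert ((n:ℤ)+1) (Finset.Icc (1:ℤ) (n:ℤ)) := by
      ext z
      simp only [Finset.mem_Icc, Finset.mem_insert]
      push_cast
      omega
    rw [this, Finset.prod_insert (by simp), ih, Nat.factorial_succ]
    push_cast
    ring

theorem prod_sub_Icc_eq (A w : ℤ) (hAw : A ≤ w) :
    (∏ z ∈ Finset.Icc A (w-1), (w - z)) = ((w - A).toNat.factorial : ℤ) := by
  rw [← prod_Icc_one_int (w - A).toNat]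
  rw [Int.toNat_of_nonneg (by omega)]
  apply Finset.prod_nbij' (fun z => w - z) (fun t => w - t)
  · intro z hz; simp only [Finset.mem_Icc] at *; omega
  · intro t ht; simp only [Finset.mem_Icc] at *; omega
  · intro z _; ring
  · intro t _; ring
  · intro z _; rfl

theorem prod_sub_Icc_eq' (B w : ℤ) (hwB : w ≤ B) :
    (∏ z ∈ Finset.Icc (w+1) B, (w - z)) = (-1) ^ (B - w).toNat * ((B - w).toNat.factorial : ℤ) := by
  have h1 : (∏ z ∈ Finset.Icc (w+1) B, (w - z))
      = ∏ z ∈ Finset.Icc (w+1) B, ((-1) * (z - w)) := by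
    apply Finset.prod_congr rfl; intro z _; ring
  rw [h1, Finset.prod_mul_distrib, Finset.prod_const]
  congr 1
  · congr 1
    rw [Int.card_Icc]
    omega
  · rw [← prod_Icc_one_int (B - w).toNat, Int.toNat_of_nonneg (by omega)]
    apply Finset.prod_nbij' (fun z => z - w) (fun t => t + w)
    · intro z hz; simp only [Finset.mem_Icc] at *; omega
    · intro t ht; simp only [Finset.mem_Icc] at *; omega
    · intro z _; ring
    · intro t _; ring
    · intro z _; rfl

theorem prod_diff_dvd_factorial {A B w : ℤ} (hw : w ∈ Finset.Icc A B) :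
    (∏ z ∈ Finset.Icc A B \ {w}, (w - z)) ∣ ((B - A).toNat.factorial : ℤ) := by
  simp only [Finset.mem_Icc] at hw
  have hsplit : Finset.Icc A B \ {w} = Finset.Icc A (w-1) ∪ Finset.Icc (w+1) B := by
    ext z
    simp only [Finset.mem_sdiff, Finset.mem_Icc, Finset.mem_union, Finset.mem_singleton]
    omega
  have hdisj : Disjoint (Finset.Icc A (w-1)) (Finset.Icc (w+1) B) := by
    rw [Finset.disjoint_left]
    intro z hz hz'
    simp only [Finset.mem_Icc] at *
    omega
  rw [hsplit, Finset.prod_union hdisj, prod_sub_Icc_eq A w hw.1, prod_sub_Icc_eq' B w hw.2]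
  set a := (w - A).toNat
  set b := (B - w).toNat
  have hab : a + b = (B - A).toNat := by omega
  have hnat : (a.factorial * b.factorial : ℕ) ∣ (B - A).toNat.factorial := by
    rw [← hab]; exact Nat.factorial_mul_factorial_dvd_factorial_add a b
  have h2 : ((a.factorial : ℤ) * (b.factorial : ℤ)) ∣ ((B - A).toNat.factorial : ℤ) := by
    exact_mod_cast hnat
  have h3 : (a.factorial : ℤ) * ((-1) ^ b * (b.factorial : ℤ))
      = (-1) ^ b * ((a.factorial : ℤ) * (b.factorial : ℤ)) := by ring
  rw [h3]
  rcases Nat.even_or_odd b with he | ho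
  · rw [he.neg_one_pow]; simpa using h2
  · rw [ho.neg_one_pow]; simpa using h2

theorem exists_small_subset {N d : ℕ} (hN : d + 1 ≤ N) (g : Fin N → ℝ) (hg : ∀ i, 0 ≤ g i) :
    ∃ S : Finset (Fin N), S.card = d + 1 ∧ ∀ i ∈ S, ((N : ℝ) - d) * g i ≤ ∑ j, g j := by
  classical
  have hpow : ((univ : Finset (Fin N)).powersetCard (d+1)).Nonempty := by
    apply Finset.powersetCard_nonempty.mpr
    simpa using hN
  obtain ⟨S, hS, hmin⟩ := Finset.exists_min_image _ (fun T => ∑ i ∈ T, g i) hpow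
  rw [Finset.mem_powersetCard] at hS
  obtain ⟨-, hcard⟩ := hS
  refine ⟨S, hcard, ?_⟩
  intro i hi
  have hle : ∀ j, j ∉ S → g i ≤ g j := by
    intro j hj
    have hj' : j ∉ S.erase i := fun h => hj (Finset.mem_of_mem_erase h)
    have hT : insert j (S.erase i) ∈ (univ : Finset (Fin N)).powersetCard (d+1) := by
      rw [Finset.mem_powersetCard]
      refine ⟨Finset.subset_univ _, ?_⟩
      rw [Finset.card_insert_of_notMem hj', Finset.card_erase_of_mem hi, hcard]
      omega
    have := hmin _ hT
    rw [Finset.sum_insert hj'] at this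
    have herase : ∑ x ∈ S.erase i, g x = (∑ x ∈ S, g x) - g i := by
      rw [← Finset.add_sum_erase _ _ hi]; ring
    rw [herase] at this
    linarith
  have h1 : (Sᶜ.card : ℝ) = (N : ℝ) - (d + 1) := by
    rw [Finset.card_compl, hcard]
    have : d + 1 ≤ Fintype.card (Fin N) := by simpa using hN
    push_cast [Nat.cast_sub this]
    simp
  have h2 : (Sᶜ.card : ℝ) * g i ≤ ∑ j ∈ Sᶜ, g j := by
    have := Finset.card_nsmul_le_sum Sᶜ g (g i) (fun j hj => hle j (by simpa using hj))
    simpa [nsmul_eq_mul] using this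
  have h3 : g i ≤ ∑ j ∈ S, g j := Finset.single_le_sum (fun j _ => hg j) hi
  have h4 : (∑ j ∈ S, g j) + ∑ j ∈ Sᶜ, g j = ∑ j, g j := Finset.sum_add_sum_compl S g
  have h5 : (0:ℝ) ≤ g i := hg i
  nlinarith

theorem abv_coeff_bound {L : Type*} [Field L] [CharZero L] (f : AbsoluteValue L ℝ)
    (A B D M : ℤ) (hD : D = B - A) (hM1 : 1 ≤ M)
    (d N : ℕ) (hN : d + 1 ≤ N)
    (P : Polynomial L) (hdeg : P.natDegree ≤ d)
    (y : Fin N → ℤ) (hinj : Function.Injective y)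
    (hyAB : ∀ i, y i ∈ Set.Icc A B) (hMy : ∀ i, |y i| ≤ M)
    (S : Finset (Fin N)) (hScard : S.card = d + 1)
    (isNA : Bool) (hNA : isNA = true → IsNonarchimedean ⇑f) :
    ∃ i₀ ∈ S, ∀ k, f (P.coeff k) ≤
      (if isNA then 1 else ((d : ℝ) + 1) * (2 * (M : ℝ)) ^ d) *
        (max 1 (f (P.eval ((y i₀ : ℤ) : L))) *
          max 1 (f (((D.toNat.factorial : ℤ) : L)⁻¹))) := by
  classical
  haveI : Nonempty (Fin N) := ⟨⟨0, by omega⟩⟩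
  set x : Fin N → L := fun i => ((y i : ℤ) : L) with hx
  have hxinj : Function.Injective x := fun i j h => hinj (Int.cast_injective h)
  set F : ℤ := (D.toNat.factorial : ℤ) with hF
  have hF0 : F ≠ 0 := by positivity
  have hFL0 : ((F : ℤ) : L) ≠ 0 := Int.cast_ne_zero.mpr hF0
  set W : ℝ := max 1 (f (((F : ℤ) : L)⁻¹)) with hW
  have hW1 : 1 ≤ W := le_max_left _ _
  have hM1R : (1:ℝ) ≤ (M:ℝ) := by exact_mod_cast hM1
  have hSne : S.Nonempty := Finset.card_pos.mp (by omega)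
  obtain ⟨i₀, hi₀S, hi₀max⟩ := S.exists_max_image
    (fun i => max 1 (f (P.eval (x i)))) hSne
  set E : ℝ := max 1 (f (P.eval (x i₀))) with hE
  have hE1 : 1 ≤ E := le_max_left _ _
  refine ⟨i₀, hi₀S, ?_⟩
  -- integer data
  set ci : Fin N → ℤ := fun i => ∏ j ∈ S.erase i, (y i - y j) with hci
  set Z : Fin N → Polynomial ℤ := fun i => ∏ j ∈ S.erase i, (X - C (y j)) with hZ
  have hci0 : ∀ i ∈ S, ci i ≠ 0 := by
    intro i hi
    rw [hci, Finset.prod_ne_zero_iff]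
    intro j hj hzero
    have hji : j ≠ i := (Finset.mem_erase.mp hj).1
    apply hji
    apply hinj
    omega
  have hcidvd : ∀ i ∈ S, ci i ∣ F := by
    intro i hi
    have himg : ci i = ∏ z ∈ (S.erase i).image y, (y i - z) := by
      rw [hci]
      rw [Finset.prod_image (fun a _ b _ hab => hinj hab)]
    have hsub : (S.erase i).image y ⊆ Finset.Icc A B \ {y i} := by
      intro z hz
      simp only [Finset.mem_image] at hz
      obtain ⟨j, hj, rfl⟩ := hz
      rw [Finset.mem_sdiff, Finset.mem_singleton, Finset.mem_Icc]
      have hj' := hyAB j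
      rw [Set.mem_Icc] at hj'
      exact ⟨hj', fun h => (Finset.mem_erase.mp hj).1 (hinj h)⟩
    have hw : y i ∈ Finset.Icc A B := by
      have := hyAB i; rw [Set.mem_Icc] at this; exact Finset.mem_Icc.mpr this
    calc ci i = ∏ z ∈ (S.erase i).image y, (y i - z) := himg
      _ ∣ ∏ z ∈ Finset.Icc A B \ {y i}, (y i - z) :=
          Finset.prod_dvd_prod_of_subset _ _ _ hsub
      _ ∣ F := by rw [hF, hD]; exact prod_diff_dvd_factorial hw
  have hZle : ∀ i ∈ S, ∀ k, |(Z i).coeff k| ≤ (1 + M) ^ d := by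
    intro i hi k
    have := coeff_prod_X_sub_C_le (S.erase i) y M (by omega) (fun j _ => hMy j) k
    rwa [Finset.card_erase_of_mem hi, hScard, Nat.add_sub_cancel] at this
  -- decomposition of the coefficient
  have hdecomp : ∀ k, P.coeff k = ∑ i ∈ S,
      P.eval (x i) * (((ci i : ℤ) : L)⁻¹ * (((Z i).map (Int.castRingHom L)).coeff k)) := by
    have hdegS : P.degree < (S.card : ℕ) := by
      rw [hScard]
      calc P.degree ≤ (P.natDegree : WithBot ℕ) := Polynomial.degree_le_natDegree
        _ < ((d + 1 : ℕ) : WithBot ℕ) := by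
            rw [Nat.cast_lt]
            omega
    have hP : P = Lagrange.interpolate S x (fun i => P.eval (x i)) :=
      Lagrange.eq_interpolate hxinj.injOn hdegS
    have hprodcast : ∀ i, ((ci i : ℤ) : L) = ∏ j ∈ S.erase i, (x i - x j) := by
      intro i
      rw [hci]
      push_cast
      rfl
    have hbasis : ∀ i ∈ S, Lagrange.basis S x i
        = Polynomial.C ((∏ j ∈ S.erase i, (x i - x j))⁻¹)
          * ((Z i).map (Int.castRingHom L)) := by
      intro i hi
      have hmapZ : (Z i).map (Int.castRingHom L) = ∏ j ∈ S.erase i, (X - Polynomial.C (x j)) := by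
        rw [hZ]
        rw [Polynomial.map_prod]
        apply Finset.prod_congr rfl
        intro j _
        rw [Polynomial.map_sub, Polynomial.map_X, Polynomial.map_C]
        rfl
      rw [hmapZ]
      rw [Lagrange.basis]
      simp only [Lagrange.basisDivisor]
      rw [Finset.prod_mul_distrib,
        ← map_prod Polynomial.C (fun j => (x i - x j)⁻¹) (S.erase i),
        Finset.prod_inv_distrib]
    intro k
    conv_lhs => rw [hP]
    rw [Lagrange.interpolate_apply, Polynomial.finset_sum_coeff]
    apply Finset.sum_congr rfl
    intro i hi
    rw [hbasis i hi, Polynomial.coeff_C_mul, Polynomial.coeff_C_mul, hprodcast i]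
  -- bound on inverse factor
  have hinv : ∀ i ∈ S, f (((ci i : ℤ) : L)⁻¹) ≤ W := by
    intro i hi
    have hciL0 : ((ci i : ℤ) : L) ≠ 0 := Int.cast_ne_zero.mpr (hci0 i hi)
    rcases abv_int_dichotomy f with hb | hb
    · obtain ⟨m, hm⟩ := hcidvd i hi
      have hrel : ((ci i : ℤ) : L)⁻¹ = ((m : ℤ) : L) * ((F : ℤ) : L)⁻¹ := by
        have hmL : ((F : ℤ) : L) = ((ci i : ℤ) : L) * ((m : ℤ) : L) := by
          rw [hm]; push_cast; ring
        field_simp [hmL]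
        exact hmL
      rw [hrel, f.map_mul]
      calc f ((m : ℤ) : L) * f (((F : ℤ) : L)⁻¹) ≤ 1 * f (((F : ℤ) : L)⁻¹) :=
            mul_le_mul_of_nonneg_right (hb m) (f.nonneg _)
        _ = f (((F : ℤ) : L)⁻¹) := one_mul _
        _ ≤ W := le_max_right _ _
    · rw [map_inv₀]
      have h1 : 1 ≤ f ((ci i : ℤ) : L) := hb _ (hci0 i hi)
      calc (f ((ci i : ℤ) : L))⁻¹ ≤ 1 := inv_le_one_of_one_le₀ h1
        _ ≤ W := hW1
  -- bound on the Z-coefficient factor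
  have hZf : ∀ i ∈ S, ∀ k, f ((((Z i).map (Int.castRingHom L)).coeff k)) ≤
      (if isNA then 1 else (2 * (M : ℝ)) ^ d) := by
    intro i hi k
    rw [Polynomial.coeff_map]
    simp only [Int.coe_castRingHom]
    cases isNA with
    | true =>
      simpa using nonarch_intCast_le_one f (hNA rfl) ((Z i).coeff k)
    | false =>
      simp only [Bool.false_eq_true, if_false]
      calc f (((Z i).coeff k : ℤ) : L) ≤ |(((Z i).coeff k : ℤ) : ℝ)| := abv_intCast_le f _
        _ ≤ ((1 + M : ℤ) : ℝ) ^ d := by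
            rw [← Int.cast_abs]
            have h2 := hZle i hi k
            have : (|(Z i).coeff k| : ℝ) ≤ (((1 + M) ^ d : ℤ) : ℝ) := by exact_mod_cast h2
            simpa using this
        _ ≤ (2 * (M : ℝ)) ^ d := by
            apply pow_le_pow_left₀ (by push_cast; linarith [hM1R])
            push_cast; linarith [hM1R]
  -- per-term bound
  have hterm : ∀ k, ∀ i ∈ S, f (P.eval (x i) * (((ci i : ℤ) : L)⁻¹ *
      (((Z i).map (Int.castRingHom L)).coeff k))) ≤
      E * (W * (if isNA then 1 else (2 * (M : ℝ)) ^ d)) := by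
    intro k i hi
    rw [f.map_mul, f.map_mul]
    have h1 : f (P.eval (x i)) ≤ E := le_trans (le_max_right _ _) (hi₀max i hi)
    refine mul_le_mul h1 ?_ (mul_nonneg (f.nonneg _) (f.nonneg _)) (by linarith [hE1])
    refine mul_le_mul (hinv i hi) (hZf i hi k) (f.nonneg _) (by linarith [hW1])
  intro k
  rw [hdecomp k]
  cases isNA with
  | true =>
    obtain ⟨b, hbS, hble⟩ := (hNA rfl).finset_image_add_of_nonempty
      (fun i => P.eval (x i) * (((ci i : ℤ) : L)⁻¹ *
        (((Z i).map (Int.castRingHom L)).coeff k))) hSne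
    simp only [if_true]
    calc f _ ≤ _ := hble
      _ ≤ E * (W * 1) := hterm k b hbS
      _ = 1 * (E * W) := by ring
  | false =>
    simp only [Bool.false_eq_true, if_false]
    calc f (∑ i ∈ S, P.eval (x i) * (((ci i : ℤ) : L)⁻¹ *
          (((Z i).map (Int.castRingHom L)).coeff k)))
        ≤ ∑ i ∈ S, f (P.eval (x i) * (((ci i : ℤ) : L)⁻¹ *
          (((Z i).map (Int.castRingHom L)).coeff k))) := f.sum_le _ _
      _ ≤ S.card • (E * (W * (2 * (M : ℝ)) ^ d)) := by
          apply Finset.sum_le_card_nsmul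
          intro i hi
          simpa using hterm k i hi
      _ = ((d : ℝ) + 1) * (2 * (M : ℝ)) ^ d * (E * W) := by
          rw [hScard, nsmul_eq_mul]
          push_cast
          ring

theorem log_max_one_inv (t : ℝ) (ht : 0 < t) :
    Real.log (max 1 t⁻¹) = Real.log (max 1 t) - Real.log t := by
  rcases le_or_gt t 1 with h | h
  · rw [max_eq_left h, max_eq_right (by rw [le_inv_comm₀ one_pos ht]; simpa using h),
      Real.log_inv, Real.log_one]
    ring
  · rw [max_eq_right h.le, max_eq_left (inv_le_one_of_one_le₀ h.le), Real.log_one]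
    ring


theorem height_poly_le_of_integer_evaluations
    {L V : Type*} [Field L] [CharZero L]
    (absv : V → AbsoluteValue L ℝ) (wt : V → ℝ) (arch : Set V)
    (harch : arch.Finite) (hwt : ∀ v, 0 ≤ wt v)
    (hna : ∀ v ∉ arch, IsNonarchimedean ⇑(absv v))
    (hsum : ∑ᶠ v ∈ arch, wt v = 1)
    (hprod : ∀ x : L, x ≠ 0 → ∑ᶠ v, wt v * Real.log (absv v x) = 0)
    (hfin : ∀ x : L, x ≠ 0 → {v | absv v x ≠ 1}.Finite)
    (A B : ℤ) (D M : ℤ) (hD : D = B - A) (hM : M = max |A| |B|)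
    (d : ℕ) (hd : 1 ≤ d) (P : Polynomial L) (hdeg : P.natDegree ≤ d)
    (N : ℕ) (hN : d + 1 ≤ N)
    (y : Fin N → ℤ) (hinj : Function.Injective y)
    (hyAB : ∀ i, y i ∈ Set.Icc A B)
    (H : ℝ) (hH : ∀ i, heightElem absv wt (P.eval ((y i : ℤ) : L)) ≤ H) :
    heightPoly absv wt P ≤
      ((N : ℝ) / ((N : ℝ) - (d : ℝ))) * H + (D : ℝ) * Real.log (D : ℝ)
        + (d : ℝ) * Real.log (2 * (M : ℝ)) + Real.log ((d : ℝ) + 1) := by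
  classical
  haveI : Nonempty (Fin N) := ⟨⟨0, by omega⟩⟩
  set x : Fin N → L := fun i => ((y i : ℤ) : L) with hxdef
  -- numeric facts
  have hABlt : A < B := by
    have h01 : y ⟨0, by omega⟩ ≠ y ⟨1, by omega⟩ := by
      intro h
      have := hinj h
      simp [Fin.ext_iff] at this
    have h0 := hyAB ⟨0, by omega⟩
    have h1 := hyAB ⟨1, by omega⟩
    rw [Set.mem_Icc] at h0 h1
    omega
  have habsA := abs_cases A
  have habsB := abs_cases B
  have hmaxA := le_max_left |A| |B|
  have hmaxB := le_max_right |A| |B|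
  have hD1 : 1 ≤ D := by omega
  have hM1 : 1 ≤ M := by rcases habsA with ⟨h1,h2⟩|⟨h1,h2⟩ <;> rcases habsB with ⟨h3,h4⟩|⟨h3,h4⟩ <;> omega
  have hMy : ∀ i, |y i| ≤ M := by
    intro i
    have hi := hyAB i
    rw [Set.mem_Icc] at hi
    rcases abs_cases (y i) with ⟨h1,h2⟩|⟨h1,h2⟩ <;>
      rcases habsA with ⟨h3,h4⟩|⟨h3,h4⟩ <;> rcases habsB with ⟨h5,h6⟩|⟨h5,h6⟩ <;> omega
  have hNd : (0:ℝ) < (N:ℝ) - d := by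
    have : (d:ℝ) + 1 ≤ N := by exact_mod_cast hN
    linarith
  set F : ℤ := (D.toNat.factorial : ℤ) with hFdef
  have hF1 : 1 ≤ F := by
    have := Nat.factorial_pos D.toNat
    omega
  have hFL0 : ((F : ℤ) : L) ≠ 0 := Int.cast_ne_zero.mpr (by omega)
  -- the finite set T
  set T0 : Set V := ((arch ∪ {v | absv v ((F : ℤ) : L) ≠ 1})
      ∪ (⋃ i : Fin N, if P.eval (x i) = 0 then (∅ : Set V) else {v | absv v (P.eval (x i)) ≠ 1}))
      ∪ (⋃ k ∈ Finset.range (P.natDegree + 1),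
          if P.coeff k = 0 then (∅ : Set V) else {v | absv v (P.coeff k) ≠ 1}) with hT0def
  have hT0fin : T0.Finite := by
    refine ((harch.union ?_).union ?_).union ?_
    · exact hfin _ hFL0
    · apply Set.finite_iUnion
      intro i
      split_ifs with h
      exacts [Set.finite_empty, hfin _ h]
    · apply Set.Finite.biUnion (Finset.range _).finite_toSet
      intro k _
      split_ifs with h
      exacts [Set.finite_empty, hfin _ h]
  set T : Finset V := hT0fin.toFinset with hTdef
  have harchT : ∀ v ∈ arch, v ∈ T := by
    intro v hv
    rw [hTdef, Set.Finite.mem_toFinset]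
    exact Or.inl (Or.inl (Or.inl hv))
  have hmemF : ∀ v, absv v ((F : ℤ) : L) ≠ 1 → v ∈ T := by
    intro v hv
    rw [hTdef, Set.Finite.mem_toFinset]
    exact Or.inl (Or.inl (Or.inr hv))
  have hmemEval : ∀ v i, P.eval (x i) ≠ 0 → absv v (P.eval (x i)) ≠ 1 → v ∈ T := by
    intro v i h0 hv
    rw [hTdef, Set.Finite.mem_toFinset]
    refine Or.inl (Or.inr ?_)
    rw [Set.mem_iUnion]
    exact ⟨i, by rw [if_neg h0]; exact hv⟩
  have hmemCoeff : ∀ v k, k < P.natDegree + 1 → P.coeff k ≠ 0 → absv v (P.coeff k) ≠ 1 → v ∈ T := by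
    intro v k hk h0 hv
    rw [hTdef, Set.Finite.mem_toFinset]
    refine Or.inr ?_
    rw [Set.mem_iUnion₂]
    exact ⟨k, Finset.mem_range.mpr hk, by rw [if_neg h0]; exact hv⟩
  -- log-term support helper
  have hlogterm_zero : ∀ (t : ℝ) (v : V), wt v * Real.log (max 1 t) ≠ 0 → 1 < t := by
    intro t v hv
    have h2 : Real.log (max 1 t) ≠ 0 := right_ne_zero_of_mul hv
    by_contra hle
    push_neg at hle
    rw [max_eq_left hle, Real.log_one] at h2
    exact h2 rfl
  -- finsum conversions
  have hheightElem : ∀ i, heightElem absv wt (P.eval (x i))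
      = ∑ v ∈ T, wt v * Real.log (max 1 (absv v (P.eval (x i)))) := by
    intro i
    rw [heightElem]
    apply finsum_eq_sum_of_support_subset
    intro v hv
    have h1 : 1 < absv v (P.eval (x i)) := hlogterm_zero _ v hv
    have h0 : P.eval (x i) ≠ 0 := by
      intro h
      rw [h, map_zero] at h1
      linarith
    exact hmemEval v i h0 (by linarith)
  have hheightPoly : heightPoly absv wt P
      = ∑ v ∈ T, wt v * Real.log (max 1 (⨆ k, absv v (P.coeff k))) := by
    rw [heightPoly]
    apply finsum_eq_sum_of_support_subset
    intro v hv
    by_contra hvT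
    apply hv
    have hone : ∀ k, absv v (P.coeff k) ≤ 1 := by
      intro k
      by_cases h0 : P.coeff k = 0
      · rw [h0, map_zero]; linarith
      · have hk : k < P.natDegree + 1 :=
          Nat.lt_succ_of_le (Polynomial.le_natDegree_of_ne_zero h0)
        by_contra hgt
        exact hvT (hmemCoeff v k hk h0 (by push_neg at hgt; linarith))
    have : max 1 (⨆ k, absv v (P.coeff k)) = 1 := max_eq_left (ciSup_le hone)
    simp [Function.mem_support, this]
  have hprodT : ∀ z : L, z ≠ 0 → ({w | absv w z ≠ 1} ⊆ ↑T) →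
      ∑ v ∈ T, wt v * Real.log (absv v z) = 0 := by
    intro z hz hsub
    rw [← hprod z hz]
    symm
    apply finsum_eq_sum_of_support_subset
    intro v hv
    have h2 : Real.log (absv v z) ≠ 0 := right_ne_zero_of_mul hv
    apply hsub
    intro h1
    rw [h1, Real.log_one] at h2
    exact h2 rfl
  have harchsum : ∑ v ∈ T.filter (· ∈ arch), wt v = 1 := by
    have h1 : T.filter (· ∈ arch) = harch.toFinset := by
      ext v
      simp only [Finset.mem_filter, Set.Finite.mem_toFinset]
      exact ⟨fun h => h.2, fun h => ⟨harchT v h, h⟩⟩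
    rw [h1, ← finsum_mem_coe_finset, Set.Finite.coe_toFinset]
    exact hsum
  have hM1R : (1:ℝ) ≤ (M:ℝ) := by exact_mod_cast hM1
  -- the key local estimate
  have key : ∀ v ∈ T, wt v * Real.log (max 1 (⨆ k, absv v (P.coeff k)))
      ≤ wt v * (((N:ℝ) - d)⁻¹ * ∑ i, Real.log (max 1 (absv v (P.eval (x i)))))
        + wt v * Real.log (max 1 (absv v (((F : ℤ) : L)⁻¹)))
        + (if v ∈ arch then wt v * (Real.log ((d:ℝ)+1) + (d:ℝ) * Real.log (2*(M:ℝ))) else 0) := by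
    intro v _
    have hwv := hwt v
    set W : ℝ := max 1 (absv v (((F : ℤ) : L)⁻¹)) with hWdef
    have hW1 : (1:ℝ) ≤ W := le_max_left _ _
    obtain ⟨S, hScard, hSmin⟩ := exists_small_subset hN
      (fun i => Real.log (max 1 (absv v (P.eval (x i)))))
      (fun i => Real.log_nonneg (le_max_left _ _))
    set R : ℝ := ((N:ℝ) - d)⁻¹ * ∑ i, Real.log (max 1 (absv v (P.eval (x i)))) with hRdef
    have hR0 : 0 ≤ R := by
      apply mul_nonneg (by positivity)
      apply Finset.sum_nonneg
      intro i _
      exact Real.log_nonneg (le_max_left _ _)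
    have hRg : ∀ i ∈ S, Real.log (max 1 (absv v (P.eval (x i)))) ≤ R := by
      intro i hi
      have h := hSmin i hi
      rw [hRdef, inv_mul_eq_div, le_div_iff₀ hNd, mul_comm]
      exact h
    by_cases hva : v ∈ arch
    · obtain ⟨i₀, hi₀S, hbound⟩ := abv_coeff_bound (absv v) A B D M hD hM1 d N hN P hdeg
        y hinj hyAB hMy S hScard false (by simp)
      simp only [Bool.false_eq_true, if_false] at hbound
      set Cf : ℝ := ((d:ℝ)+1) * (2*(M:ℝ)) ^ d with hCfdef
      have hpow1 : (1:ℝ) ≤ (2*(M:ℝ)) ^ d := one_le_pow₀ (by linarith)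
      have hCf1 : 1 ≤ Cf := by nlinarith
      set E : ℝ := max 1 (absv v (P.eval (x i₀))) with hEdef
      have hE1 : (1:ℝ) ≤ E := le_max_left _ _
      have hEW1 : (1:ℝ) ≤ E * W := by nlinarith
      have hsup : max 1 (⨆ k, absv v (P.coeff k)) ≤ Cf * (E * W) := by
        apply max_le
        · nlinarith
        · apply ciSup_le
          intro k
          exact hbound k
      have hlog : Real.log (max 1 (⨆ k, absv v (P.coeff k)))
          ≤ Real.log Cf + (Real.log E + Real.log W) := by
        calc Real.log (max 1 (⨆ k, absv v (P.coeff k))) ≤ Real.log (Cf * (E * W)) :=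
              Real.log_le_log (by positivity) hsup
          _ = Real.log Cf + (Real.log E + Real.log W) := by
              rw [show Real.log (Cf * (E * W)) = Real.log Cf + Real.log (E * W) from
                  Real.log_mul (by positivity) (by positivity),
                show Real.log (E * W) = Real.log E + Real.log W from
                  Real.log_mul (by positivity) (by positivity)]
      have hlogCf : Real.log Cf = Real.log ((d:ℝ)+1) + (d:ℝ) * Real.log (2*(M:ℝ)) := by
        rw [hCfdef, Real.log_mul (by positivity) (by positivity), Real.log_pow]
      have hlogE : Real.log E ≤ R := hRg i₀ hi₀S
      rw [if_pos hva]
      calc wt v * Real.log (max 1 (⨆ k, absv v (P.coeff k)))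
          ≤ wt v * (R + Real.log W + (Real.log ((d:ℝ)+1) + (d:ℝ) * Real.log (2*(M:ℝ)))) := by
            apply mul_le_mul_of_nonneg_left _ hwv
            rw [hlogCf] at hlog
            linarith
        _ = wt v * R + wt v * Real.log W
            + wt v * (Real.log ((d:ℝ)+1) + (d:ℝ) * Real.log (2*(M:ℝ))) := by ring
    · obtain ⟨i₀, hi₀S, hbound⟩ := abv_coeff_bound (absv v) A B D M hD hM1 d N hN P hdeg
        y hinj hyAB hMy S hScard true (fun _ => hna v hva)
      simp only [if_true] at hbound
      set E : ℝ := max 1 (absv v (P.eval (x i₀))) with hEdef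
      have hE1 : (1:ℝ) ≤ E := le_max_left _ _
      have hsup : max 1 (⨆ k, absv v (P.coeff k)) ≤ E * W := by
        apply max_le
        · nlinarith [hE1, hW1]
        · apply ciSup_le
          intro k
          have := hbound k
          rwa [one_mul] at this
      have hlog : Real.log (max 1 (⨆ k, absv v (P.coeff k))) ≤ Real.log E + Real.log W := by
        calc Real.log (max 1 (⨆ k, absv v (P.coeff k))) ≤ Real.log (E * W) :=
              Real.log_le_log (by positivity) hsup
          _ = Real.log E + Real.log W := Real.log_mul (by positivity) (by positivity)
      have hlogE : Real.log E ≤ R := hRg i₀ hi₀S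
      rw [if_neg hva, add_zero]
      calc wt v * Real.log (max 1 (⨆ k, absv v (P.coeff k)))
          ≤ wt v * (R + Real.log W) := by
            apply mul_le_mul_of_nonneg_left _ hwv
            linarith
        _ = wt v * R + wt v * Real.log W := by ring
  -- assembly
  rw [hheightPoly]
  have hstep := Finset.sum_le_sum key
  refine le_trans hstep ?_
  rw [Finset.sum_add_distrib, Finset.sum_add_distrib]
  set c : ℝ := ((N:ℝ) - d)⁻¹ with hcdef
  have hc0 : 0 ≤ c := by positivity
  -- Part A
  have hA : ∑ v ∈ T, wt v * (c * ∑ i, Real.log (max 1 (absv v (P.eval (x i)))))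
      ≤ ((N:ℝ) / ((N:ℝ) - d)) * H := by
    have e1 : ∑ v ∈ T, wt v * (c * ∑ i, Real.log (max 1 (absv v (P.eval (x i)))))
        = c * ∑ i, ∑ v ∈ T, wt v * Real.log (max 1 (absv v (P.eval (x i)))) := by
      calc ∑ v ∈ T, wt v * (c * ∑ i, Real.log (max 1 (absv v (P.eval (x i)))))
          = ∑ v ∈ T, ∑ i, c * (wt v * Real.log (max 1 (absv v (P.eval (x i))))) := by
            apply Finset.sum_congr rfl
            intro v _
            rw [Finset.mul_sum, Finset.mul_sum]
            apply Finset.sum_congr rfl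
            intro i _
            ring
        _ = ∑ i, ∑ v ∈ T, c * (wt v * Real.log (max 1 (absv v (P.eval (x i))))) :=
            Finset.sum_comm
        _ = c * ∑ i, ∑ v ∈ T, wt v * Real.log (max 1 (absv v (P.eval (x i)))) := by
            rw [Finset.mul_sum]
            apply Finset.sum_congr rfl
            intro i _
            rw [Finset.mul_sum]
    rw [e1]
    have e2 : ∑ i : Fin N, ∑ v ∈ T, wt v * Real.log (max 1 (absv v (P.eval (x i)))) ≤ (N:ℝ) * H := by
      calc ∑ i : Fin N, ∑ v ∈ T, wt v * Real.log (max 1 (absv v (P.eval (x i))))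
          = ∑ i : Fin N, heightElem absv wt (P.eval (x i)) := by
            apply Finset.sum_congr rfl
            intro i _
            exact (hheightElem i).symm
        _ ≤ ∑ _i : Fin N, H := Finset.sum_le_sum (fun i _ => hH i)
        _ = (N:ℝ) * H := by rw [Finset.sum_const, Finset.card_univ, Fintype.card_fin, nsmul_eq_mul]
    calc c * ∑ i : Fin N, ∑ v ∈ T, wt v * Real.log (max 1 (absv v (P.eval (x i))))
        ≤ c * ((N:ℝ) * H) := mul_le_mul_of_nonneg_left e2 hc0
      _ = ((N:ℝ) / ((N:ℝ) - d)) * H := by rw [hcdef, div_eq_mul_inv]; ring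
  -- Part B
  have hB : ∑ v ∈ T, wt v * Real.log (max 1 (absv v (((F : ℤ) : L)⁻¹)))
      ≤ (D:ℝ) * Real.log (D:ℝ) := by
    have hFpos : ∀ v, 0 < absv v ((F : ℤ) : L) := fun v => (absv v).pos hFL0
    have e1 : ∀ v, wt v * Real.log (max 1 (absv v (((F : ℤ) : L)⁻¹)))
        = wt v * Real.log (max 1 (absv v ((F : ℤ) : L))) - wt v * Real.log (absv v ((F : ℤ) : L)) := by
      intro v
      rw [map_inv₀, log_max_one_inv _ (hFpos v)]
      ring
    calc ∑ v ∈ T, wt v * Real.log (max 1 (absv v (((F : ℤ) : L)⁻¹)))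
        = ∑ v ∈ T, (wt v * Real.log (max 1 (absv v ((F : ℤ) : L)))
            - wt v * Real.log (absv v ((F : ℤ) : L))) := by
          apply Finset.sum_congr rfl
          intro v _
          exact e1 v
      _ = ∑ v ∈ T, wt v * Real.log (max 1 (absv v ((F : ℤ) : L)))
          - ∑ v ∈ T, wt v * Real.log (absv v ((F : ℤ) : L)) := Finset.sum_sub_distrib _ _
      _ = ∑ v ∈ T, wt v * Real.log (max 1 (absv v ((F : ℤ) : L))) := by
          rw [hprodT ((F : ℤ) : L) hFL0 (fun w hw => Finset.mem_coe.mpr (hmemF w hw)), sub_zero]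
      _ ≤ ∑ v ∈ T, (if v ∈ arch then wt v * Real.log ((F:ℤ):ℝ) else 0) := by
          apply Finset.sum_le_sum
          intro v _
          by_cases hva : v ∈ arch
          · rw [if_pos hva]
            apply mul_le_mul_of_nonneg_left _ (hwt v)
            apply Real.log_le_log (by positivity)
            apply max_le
            · exact_mod_cast hF1
            · calc absv v ((F : ℤ) : L) ≤ |((F:ℤ):ℝ)| := abv_intCast_le (absv v) F
                _ = ((F:ℤ):ℝ) := abs_of_nonneg (by exact_mod_cast (by omega : (0:ℤ) ≤ F))
          · rw [if_neg hva]
            rw [max_eq_left (nonarch_intCast_le_one (absv v) (hna v hva) F), Real.log_one,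
              mul_zero]
      _ = Real.log ((F:ℤ):ℝ) := by
          rw [← Finset.sum_filter, ← Finset.sum_mul, harchsum, one_mul]
      _ ≤ (D:ℝ) * Real.log (D:ℝ) := by
          have h1 : (D.toNat.factorial : ℝ) ≤ ((D.toNat : ℕ) : ℝ) ^ D.toNat := by
            exact_mod_cast Nat.factorial_le_pow D.toNat
          have h2 : ((D.toNat : ℕ) : ℝ) = (D:ℝ) := by
            exact_mod_cast congrArg (Int.cast : ℤ → ℝ) (Int.toNat_of_nonneg (by omega : (0:ℤ) ≤ D))
          have h3 : ((F:ℤ):ℝ) = (D.toNat.factorial : ℝ) := by rw [hFdef]; push_cast; ring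
          calc Real.log ((F:ℤ):ℝ) ≤ Real.log ((D:ℝ) ^ D.toNat) := by
                apply Real.log_le_log (by rw [h3]; positivity)
                rw [h3, ← h2]
                exact h1
            _ = (D.toNat : ℝ) * Real.log (D:ℝ) := Real.log_pow _ _
            _ = (D:ℝ) * Real.log (D:ℝ) := by rw [h2]
  -- Part C
  have hC : ∑ v ∈ T, (if v ∈ arch then wt v * (Real.log ((d:ℝ)+1) + (d:ℝ) * Real.log (2*(M:ℝ))) else 0)
      = Real.log ((d:ℝ)+1) + (d:ℝ) * Real.log (2*(M:ℝ)) := by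
    rw [← Finset.sum_filter, ← Finset.sum_mul, harchsum, one_mul]
  linarith [hA, hB, hC.le, hC.ge]
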